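/- Let μ be a finite Borel measure on S^{n-1} not concentrated on any closed hemisphere, and let q > 0. Suppose {K_i} is a sequence of convex bodies containing the origin with ∫_{S^{n-1}} h_{K_i}(v)^q dμ(v) bounded above. Then the sequence {K_i} is uniformly bounded, i.e. there exists R > 0 with K_i ⊆ R·Bⁿ for all i. -/

import Mathlib

open scoped RealInnerProductSpace
open MeasureTheory

noncomputable def suppFn {n : ℕ} (K : Set (EuclideanSpace ℝ (Fin n)))
    (v : EuclideanSpace ℝ (Fin n)) : ℝ :=
  sSup ((fun x => ⟪x, v⟫) '' K)

lemma bddAbove_inner_image {n : ℕ} {K : Set (EuclideanSpace ℝ (Fin n))}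
    (hK : IsCompact K) (v : EuclideanSpace ℝ (Fin n)) :
    BddAbove ((fun x => ⟪x, v⟫) '' K) :=
  (hK.image (continuous_id.inner continuous_const)).bddAbove

lemma inner_le_suppFn {n : ℕ} {K : Set (EuclideanSpace ℝ (Fin n))}
    (hK : IsCompact K) {x : EuclideanSpace ℝ (Fin n)} (hx : x ∈ K)
    (v : EuclideanSpace ℝ (Fin n)) : ⟪x, v⟫ ≤ suppFn K v :=
  le_csSup (bddAbove_inner_image hK v) ⟨x, hx, rfl⟩

lemma suppFn_nonneg {n : ℕ} {K : Set (EuclideanSpace ℝ (Fin n))}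
    (hK : IsCompact K) (h0 : (0 : EuclideanSpace ℝ (Fin n)) ∈ K)
    (v : EuclideanSpace ℝ (Fin n)) : 0 ≤ suppFn K v := by
  have := inner_le_suppFn hK h0 v
  simpa using this

lemma suppFn_le {n : ℕ} {K : Set (EuclideanSpace ℝ (Fin n))}
    (hne : K.Nonempty) {M : ℝ} (hM : ∀ x ∈ K, ‖x‖ ≤ M)
    {v : EuclideanSpace ℝ (Fin n)} (hv : ‖v‖ ≤ 1) : suppFn K v ≤ M := by
  apply csSup_le (hne.image _)
  rintro _ ⟨x, hx, rfl⟩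
  calc ⟪x, v⟫ ≤ ‖x‖ * ‖v‖ := real_inner_le_norm x v
    _ ≤ M * 1 := by
        have h0 : (0:ℝ) ≤ ‖x‖ := norm_nonneg x
        exact mul_le_mul (hM x hx) hv (norm_nonneg v) ((h0.trans (hM x hx)))
    _ = M := mul_one M

lemma continuous_suppFn {n : ℕ} {K : Set (EuclideanSpace ℝ (Fin n))}
    (hK : IsCompact K) (hne : K.Nonempty) : Continuous (suppFn K) := by
  obtain ⟨M, hM⟩ := (hK.image continuous_norm).bddAbove
  have hM' : ∀ x ∈ K, ‖x‖ ≤ M := fun x hx => hM ⟨x, hx, rfl⟩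
  have hM0 : 0 ≤ M := by
    obtain ⟨x, hx⟩ := hne
    exact (norm_nonneg x).trans (hM' x hx)
  have key : ∀ v w : EuclideanSpace ℝ (Fin n),
      suppFn K v ≤ suppFn K w + M * ‖v - w‖ := by
    intro v w
    apply csSup_le (hne.image _)
    rintro _ ⟨x, hx, rfl⟩
    dsimp only
    have h1 : ⟪x, v⟫ = ⟪x, w⟫ + ⟪x, v - w⟫ := by
      rw [inner_sub_right]; ring
    rw [h1]
    have h2 : ⟪x, v - w⟫ ≤ M * ‖v - w‖ :=
      (real_inner_le_norm x (v - w)).trans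
        (mul_le_mul_of_nonneg_right (hM' x hx) (norm_nonneg _))
    exact add_le_add (inner_le_suppFn hK hx w) h2
  have lip : LipschitzWith (Real.toNNReal M) (suppFn K) := by
    rw [lipschitzWith_iff_dist_le_mul]
    intro v w
    rw [Real.dist_eq, abs_sub_le_iff]
    constructor
    · have := key v w
      have hd : dist v w = ‖v - w‖ := dist_eq_norm v w
      rw [hd, Real.coe_toNNReal M hM0]; linarith
    · have := key w v
      have hd : dist v w = ‖w - v‖ := by rw [dist_comm]; exact dist_eq_norm w v
      rw [hd, Real.coe_toNNReal M hM0]; linarith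
  exact lip.continuous

/-- If `μ` is a finite measure on `S^{n-1}` not concentrated on any closed hemisphere,
`q > 0`, and `{K_i}` are convex bodies containing the origin with
`∫ h_{K_i}^q dμ` bounded above, then the `K_i` are uniformly bounded. -/
theorem stmt6 {n : ℕ}
    (μ : Measure (Metric.sphere (0 : EuclideanSpace ℝ (Fin n)) 1)) [IsFiniteMeasure μ]
    (hμ : ∀ u : Metric.sphere (0 : EuclideanSpace ℝ (Fin n)) 1,
      0 < μ {v : Metric.sphere (0 : EuclideanSpace ℝ (Fin n)) 1 |
        0 < ⟪(u : EuclideanSpace ℝ (Fin n)), (v : EuclideanSpace ℝ (Fin n))⟫})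
    (q : ℝ) (hq : 0 < q)
    (K : ℕ → Set (EuclideanSpace ℝ (Fin n)))
    (hconv : ∀ i, Convex ℝ (K i)) (hcomp : ∀ i, IsCompact (K i))
    (hint : ∀ i, (interior (K i)).Nonempty)
    (h0 : ∀ i, (0 : EuclideanSpace ℝ (Fin n)) ∈ K i)
    (B : ℝ)
    (hB : ∀ i, ∫ v, suppFn (K i) (v : EuclideanSpace ℝ (Fin n)) ^ q ∂μ ≤ B) :
    ∃ R > (0 : ℝ), ∀ i, K i ⊆ Metric.closedBall (0 : EuclideanSpace ℝ (Fin n)) R := by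
  by_contra hcon
  push_neg at hcon
  -- extract, for each m, a body with a point of norm > m + 1
  have H : ∀ m : ℕ, ∃ i, ∃ x ∈ K i, (m : ℝ) + 1 < ‖x‖ := by
    intro m
    obtain ⟨i, hi⟩ := hcon ((m : ℝ) + 1) (by positivity)
    rw [Set.not_subset] at hi
    obtain ⟨x, hx, hx2⟩ := hi
    refine ⟨i, x, hx, ?_⟩
    simpa [Metric.mem_closedBall, dist_eq_norm, not_le] using hx2
  choose i x hxK hxn using H
  have hx0 : ∀ m, x m ≠ 0 := by
    intro m hm
    have := hxn m
    rw [hm, norm_zero] at this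
    have : (0:ℝ) ≤ (m:ℝ) := Nat.cast_nonneg m
    linarith [hxn m]
  have hxpos : ∀ m, (0:ℝ) < ‖x m‖ := fun m => norm_pos_iff.mpr (hx0 m)
  -- normalized directions
  set u : ℕ → EuclideanSpace ℝ (Fin n) := fun m => ‖x m‖⁻¹ • x m with hu_def
  have humem : ∀ m, u m ∈ Metric.sphere (0 : EuclideanSpace ℝ (Fin n)) 1 := by
    intro m
    simp only [mem_sphere_iff_norm, sub_zero, hu_def, norm_smul, norm_inv, norm_norm]
    rw [inv_mul_eq_div]
    exact div_self (hxpos m).ne'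
  obtain ⟨w, hw, φ, hφ, hconv_u⟩ :=
    (isCompact_sphere (0 : EuclideanSpace ℝ (Fin n)) 1).tendsto_subseq humem
  -- positive measure of open hemisphere at w
  have hpos := hμ ⟨w, hw⟩
  set S := {v : Metric.sphere (0 : EuclideanSpace ℝ (Fin n)) 1 |
    0 < ⟪w, (v : EuclideanSpace ℝ (Fin n))⟫} with hS_def
  -- find ε > 0 with positive measure of {ε ≤ ⟪w, v⟫}
  have hexists : ∃ ε : ℝ, 0 < ε ∧
      0 < μ {v : Metric.sphere (0 : EuclideanSpace ℝ (Fin n)) 1 |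
        ε ≤ ⟪w, (v : EuclideanSpace ℝ (Fin n))⟫} := by
    by_contra hno
    push_neg at hno
    have hz : ∀ m : ℕ, μ {v : Metric.sphere (0 : EuclideanSpace ℝ (Fin n)) 1 |
        ((m : ℝ) + 1)⁻¹ ≤ ⟪w, (v : EuclideanSpace ℝ (Fin n))⟫} = 0 := by
      intro m
      have h1 : (0:ℝ) < ((m : ℝ) + 1)⁻¹ := by positivity
      have := hno _ h1
      exact le_antisymm this zero_le
    have hsub : S ⊆ ⋃ m : ℕ, {v : Metric.sphere (0 : EuclideanSpace ℝ (Fin n)) 1 |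
        ((m : ℝ) + 1)⁻¹ ≤ ⟪w, (v : EuclideanSpace ℝ (Fin n))⟫} := by
      intro v hv
      obtain ⟨m, hm⟩ := exists_nat_one_div_lt (show (0:ℝ) < ⟪w, (v : EuclideanSpace ℝ (Fin n))⟫ from hv)
      rw [one_div] at hm
      exact Set.mem_iUnion.mpr ⟨m, hm.le⟩
    have : μ S = 0 := measure_mono_null hsub (measure_iUnion_null hz)
    rw [this] at hpos
    exact lt_irrefl _ hpos
  obtain ⟨ε, hε, hApos⟩ := hexists
  set A := {v : Metric.sphere (0 : EuclideanSpace ℝ (Fin n)) 1 |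
    ε ≤ ⟪w, (v : EuclideanSpace ℝ (Fin n))⟫} with hA_def
  have hAmeas : MeasurableSet A := by
    have hcont : Continuous fun v : Metric.sphere (0 : EuclideanSpace ℝ (Fin n)) 1 =>
        ⟪w, (v : EuclideanSpace ℝ (Fin n))⟫ :=
      Continuous.inner continuous_const continuous_subtype_val
    exact measurableSet_le measurable_const hcont.measurable
  set a := (μ A).toReal with ha_def
  have hapos : 0 < a := ENNReal.toReal_pos hApos.ne' (measure_ne_top μ A)
  -- threshold t
  set t := ((|B| + 1) / a) ^ q⁻¹ with ht_def
  have ht0 : 0 ≤ t := Real.rpow_nonneg (by positivity) _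
  have htq : t ^ q * a = |B| + 1 := by
    rw [ht_def, Real.rpow_inv_rpow (by positivity) hq.ne']
    field_simp
  -- choose k large
  have htend : Filter.Tendsto (fun k => dist ((u ∘ φ) k) w) Filter.atTop (nhds 0) :=
    tendsto_iff_dist_tendsto_zero.mp hconv_u
  have hev : ∀ᶠ k in Filter.atTop, dist ((u ∘ φ) k) w < ε / 2 :=
    htend.eventually (Filter.Tendsto.eventually_lt_const (by linarith) Filter.tendsto_id)
  obtain ⟨N, hN⟩ := hev.exists_forall_of_atTop
  set k := max N ⌈2 * t / ε⌉₊ with hk_def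
  set m := φ k with hm_def
  have hdist : dist (u m) w < ε / 2 := hN k (le_max_left _ _)
  have hknorm : 2 * t / ε ≤ (k : ℝ) := by
    calc 2 * t / ε ≤ (⌈2 * t / ε⌉₊ : ℝ) := Nat.le_ceil _
      _ ≤ (k : ℝ) := Nat.cast_le.mpr (le_max_right _ _)
  have hxm : 2 * t / ε < ‖x m‖ := by
    have h1 : (k : ℝ) ≤ (φ k : ℝ) := Nat.cast_le.mpr (hφ.le_apply)
    have := hxn m
    rw [hm_def]
    calc 2 * t / ε ≤ (k : ℝ) := hknorm
      _ ≤ (φ k : ℝ) := h1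
      _ < (φ k : ℝ) + 1 := by linarith
      _ < ‖x (φ k)‖ := hxn (φ k)
  have htle : t ≤ ‖x m‖ * (ε / 2) := by
    rw [div_lt_iff₀ hε] at hxm
    nlinarith
  -- lower bound for suppFn on A
  have hlb : ∀ v ∈ A, t ≤ suppFn (K (i m)) (v : EuclideanSpace ℝ (Fin n)) := by
    intro v hv
    have hvnorm : ‖(v : EuclideanSpace ℝ (Fin n))‖ = 1 := by
      have := v.2
      simpa [mem_sphere_iff_norm] using this
    have hinner : ε / 2 ≤ ⟪u m, (v : EuclideanSpace ℝ (Fin n))⟫ := by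
      have h1 : ⟪u m, (v : EuclideanSpace ℝ (Fin n))⟫ =
          ⟪w, (v : EuclideanSpace ℝ (Fin n))⟫ + ⟪u m - w, (v : EuclideanSpace ℝ (Fin n))⟫ := by
        rw [inner_sub_left]; ring
      have h2 : |⟪u m - w, (v : EuclideanSpace ℝ (Fin n))⟫| ≤ ‖u m - w‖ := by
        have := abs_real_inner_le_norm (u m - w) (v : EuclideanSpace ℝ (Fin n))
        rwa [hvnorm, mul_one] at this
      have h3 : ‖u m - w‖ < ε / 2 := by rwa [dist_eq_norm] at hdist
      have h4 : -(ε/2) ≤ ⟪u m - w, (v : EuclideanSpace ℝ (Fin n))⟫ := by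
        have := neg_abs_le ⟪u m - w, (v : EuclideanSpace ℝ (Fin n))⟫
        linarith
      have h5 : ε ≤ ⟪w, (v : EuclideanSpace ℝ (Fin n))⟫ := hv
      linarith [h1 ▸ add_le_add h5 h4]
    have hx_eq : ⟪x m, (v : EuclideanSpace ℝ (Fin n))⟫ =
        ‖x m‖ * ⟪u m, (v : EuclideanSpace ℝ (Fin n))⟫ := by
      have : x m = ‖x m‖ • u m := by
        rw [hu_def]; simp [smul_smul, mul_inv_cancel₀ (hxpos m).ne']
      conv_lhs => rw [this]
      rw [real_inner_smul_left]
    have : ‖x m‖ * (ε / 2) ≤ ⟪x m, (v : EuclideanSpace ℝ (Fin n))⟫ := by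
      rw [hx_eq]
      exact mul_le_mul_of_nonneg_left hinner (hxpos m).le
    exact le_trans htle (this.trans (inner_le_suppFn (hcomp (i m)) (hxK m) _))
  -- integrability of f
  set f := fun v : Metric.sphere (0 : EuclideanSpace ℝ (Fin n)) 1 =>
    suppFn (K (i m)) (v : EuclideanSpace ℝ (Fin n)) ^ q with hf_def
  have hKne : (K (i m)).Nonempty := ⟨0, h0 (i m)⟩
  have hfcont : Continuous f := by
    apply (Real.continuous_rpow_const hq.le).comp
    exact (continuous_suppFn (hcomp (i m)) hKne).comp continuous_subtype_val
  obtain ⟨M, hM⟩ := ((hcomp (i m)).image continuous_norm).bddAbove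
  have hM' : ∀ y ∈ K (i m), ‖y‖ ≤ M := fun y hy => hM ⟨y, hy, rfl⟩
  have hM0 : 0 ≤ M := (norm_nonneg _).trans (hM' 0 (h0 (i m)))
  have hf0 : ∀ v, 0 ≤ f v := fun v =>
    Real.rpow_nonneg (suppFn_nonneg (hcomp (i m)) (h0 (i m)) _) q
  have hfint : Integrable f μ := by
    apply Integrable.mono' (integrable_const (M ^ q))
      hfcont.measurable.aestronglyMeasurable
    filter_upwards with v
    rw [Real.norm_eq_abs, abs_of_nonneg (hf0 v)]
    have hvnorm : ‖(v : EuclideanSpace ℝ (Fin n))‖ = 1 := by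
      have := v.2; simpa [mem_sphere_iff_norm] using this
    exact Real.rpow_le_rpow (suppFn_nonneg (hcomp (i m)) (h0 (i m)) _)
      (suppFn_le hKne hM' hvnorm.le) hq.le
  -- integral estimates
  have h_set : t ^ q * a ≤ ∫ v in A, f v ∂μ := by
    refine le_of_eq_of_le (by rw [smul_eq_mul, mul_comm]; rfl)
      (setIntegral_ge_of_const_le (c := t ^ q) hAmeas (measure_ne_top μ A) ?_ ?_)
    · intro v hv
      exact Real.rpow_le_rpow ht0 (hlb v hv) hq.le
    · exact hfint.integrableOn
  have h_full : ∫ v in A, f v ∂μ ≤ ∫ v, f v ∂μ :=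
    setIntegral_le_integral hfint (Filter.Eventually.of_forall hf0)
  have hBle := hB (i m)
  have : |B| + 1 ≤ B := by
    calc |B| + 1 = t ^ q * a := htq.symm
      _ ≤ ∫ v in A, f v ∂μ := h_set
      _ ≤ ∫ v, f v ∂μ := h_full
      _ ≤ B := hBle
  have := le_abs_self B
  linarith
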